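/- Let I ⊆ ℝ₊ be a nonempty nondegenerate interval with 0 ∈ I, and f : I → ℝ be Φ-monotone, where Φ : [0, length(I)] → ℝ₊ is subadditive and concave. Then there exists a nondecreasing function g : I → ℝ such that Φ(x) ≤ g(x) - f(x) ≤ 2Φ(x/2) for all x ∈ I. -/
import Mathlib


theorem stmt_4 (I : Set ℝ) (hI : I.OrdConnected) (h0 : 0 ∈ I) (hpos : I ⊆ Set.Ici (0:ℝ))
    (hnd : ∃ x ∈ I, x ≠ 0) (L : ℝ) (hL : IsLUB I L) (Φ : ℝ → ℝ)
    (hnonneg : ∀ u ∈ Set.Icc (0:ℝ) L, 0 ≤ Φ u)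
    (hsub : ∀ u v : ℝ, u ∈ Set.Icc (0:ℝ) L → v ∈ Set.Icc (0:ℝ) L →
      u + v ∈ Set.Icc (0:ℝ) L → Φ (u + v) ≤ Φ u + Φ v)
    (hconc : ConcaveOn ℝ (Set.Icc (0:ℝ) L) Φ)
    (f : ℝ → ℝ) (hf : ∀ x ∈ I, ∀ y ∈ I, x ≤ y → f x ≤ f y + Φ (y - x)) :
    ∃ g : ℝ → ℝ, MonotoneOn g I ∧
      ∀ x ∈ I, Φ x ≤ g x - f x ∧ g x - f x ≤ 2 * Φ (x / 2) := by
  have hIcc : I ⊆ Set.Icc (0:ℝ) L := fun x hx => ⟨hpos hx, hL.1 hx⟩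
  -- key inequality
  have key : ∀ x ∈ I, ∀ z ∈ I, x ≤ z → f x + Φ x ≤ f z + 2 * Φ (z / 2) := by
    intro x hx z hz hxz
    have hxI := hIcc hx
    have hzI := hIcc hz
    have hzx : z - x ∈ Set.Icc (0:ℝ) L :=
      ⟨by linarith [hxI.1], by linarith [hxI.1, hzI.2]⟩
    have hconcmid := hconc.2 hxI hzx (by norm_num : (0:ℝ) ≤ 1/2)
      (by norm_num : (0:ℝ) ≤ 1/2) (by norm_num)
    simp only [smul_eq_mul] at hconcmid
    have hmid : (1/2 : ℝ) * x + (1/2 : ℝ) * (z - x) = z / 2 := by ring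
    rw [hmid] at hconcmid
    have h1 := hf x hx z hz hxz
    linarith
  set S : ℝ → Set ℝ := fun u => (fun z => f z + 2 * Φ (z / 2)) '' {z | z ∈ I ∧ u ≤ z}
    with hS
  refine ⟨fun u => sInf (S u), ?_, ?_⟩
  · intro u hu v hv huv
    apply csInf_le_csInf
    · exact ⟨f u + Φ u, by rintro w ⟨z, ⟨hzI, hz⟩, rfl⟩; exact key u hu z hzI hz⟩
    · exact ⟨f v + 2 * Φ (v / 2), v, ⟨hv, le_refl v⟩, rfl⟩
    · rintro w ⟨z, ⟨hzI, hz⟩, rfl⟩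
      exact ⟨z, ⟨hzI, le_trans huv hz⟩, rfl⟩
  · intro x hx
    have hbd : ∀ w ∈ S x, f x + Φ x ≤ w := by
      rintro w ⟨z, ⟨hzI, hz⟩, rfl⟩; exact key x hx z hzI hz
    have hm : f x + 2 * Φ (x / 2) ∈ S x := ⟨x, ⟨hx, le_refl x⟩, rfl⟩
    constructor
    · have := le_csInf ⟨f x + 2 * Φ (x / 2), hm⟩ hbd
      linarith
    · have := csInf_le ⟨f x + Φ x, hbd⟩ hm
      linarith
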